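/- Every element g of the derived subgroup [N,N] of a free nilpotent group N of rank r with basis {z₁,…,z_r} can be written as a product of r commutators of the special form g = [g₁,z₁]···[g_r,z_r] for some g₁,…,g_r ∈ N. -/

import Mathlib

open Subgroup
open scoped commutatorElement

section Helpers

variable {G H : Type*} [Group G] [Group H]

lemma lcs_map_eq (f : G →* H) (hf : Function.Surjective f) (n : ℕ) :
    ((⊤ : Subgroup G).lowerCentralSeries n).map f = (⊤ : Subgroup H).lowerCentralSeries n := by
  induction n with
  | zero => simpa using Subgroup.map_top_of_surjective f hf
  | succ n ih =>
      show Subgroup.map f ⁅(⊤ : Subgroup G).lowerCentralSeries n, ⊤⁆ = ⁅(⊤ : Subgroup H).lowerCentralSeries n, ⊤⁆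
      rw [Subgroup.map_commutator, ih, Subgroup.map_top_of_surjective f hf]

/-- product of pointwise products, when the second factors are central -/
lemma ofFn_prod_mul {n : ℕ} (a b : Fin n → G) (hb : ∀ i, b i ∈ Subgroup.center G) :
    (List.ofFn a).prod * (List.ofFn b).prod = (List.ofFn fun i => a i * b i).prod := by
  induction n with
  | zero => simp
  | succ n ih =>
      rw [List.ofFn_succ, List.ofFn_succ, List.ofFn_succ (f := fun i => a i * b i)]
      simp only [List.prod_cons]
      have h1 : b 0 * (List.ofFn fun i : Fin n => a i.succ).prod =
          (List.ofFn fun i : Fin n => a i.succ).prod * b 0 :=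
        ((Subgroup.mem_center_iff.mp (hb 0)) _).symm
      calc a 0 * (List.ofFn fun i : Fin n => a i.succ).prod *
            (b 0 * (List.ofFn fun i : Fin n => b i.succ).prod)
          = a 0 * ((List.ofFn fun i : Fin n => a i.succ).prod * b 0) *
            (List.ofFn fun i : Fin n => b i.succ).prod := by group
        _ = a 0 * (b 0 * (List.ofFn fun i : Fin n => a i.succ).prod) *
            (List.ofFn fun i : Fin n => b i.succ).prod := by rw [h1]
        _ = a 0 * b 0 * ((List.ofFn fun i : Fin n => a i.succ).prod *
            (List.ofFn fun i : Fin n => b i.succ).prod) := by group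
        _ = a 0 * b 0 * (List.ofFn fun i : Fin n => a i.succ * b i.succ).prod := by
            rw [ih _ _ (fun i => hb _)]

lemma ofFn_prod_single {n : ℕ} (f : Fin n → G) (i : Fin n) (h : ∀ j, j ≠ i → f j = 1) :
    (List.ofFn f).prod = f i := by
  induction n with
  | zero => exact absurd i.2 (by omega)
  | succ n ih =>
      rw [List.ofFn_succ, List.prod_cons]
      rcases eq_or_ne i 0 with rfl | hi
      · have h0 : (List.ofFn fun j : Fin n => f j.succ).prod = 1 := by
          apply List.prod_eq_one
          intro x hx
          rw [List.mem_ofFn] at hx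
          obtain ⟨j, rfl⟩ := hx
          exact h _ (Fin.succ_ne_zero j)
        rw [h0, mul_one]
      · obtain ⟨j, rfl⟩ := Fin.exists_succ_eq.mpr hi
        rw [h 0 (Ne.symm hi), one_mul]
        exact ih _ j (fun k hk => h _ (by simpa using fun e => hk (Fin.succ_injective _ e)))

/-- central multiplicativity of commutators in the left slot -/
lemma comm_mul_left (u v z : G) (hv : ⁅v, z⁆ ∈ Subgroup.center G) :
    ⁅u * v, z⁆ = ⁅u, z⁆ * ⁅v, z⁆ := by
  have h := Subgroup.mem_center_iff.mp hv
  calc ⁅u * v, z⁆ = u * ⁅v, z⁆ * u⁻¹ * ⁅u, z⁆ := by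
        simp only [commutatorElement_def]; group
    _ = ⁅v, z⁆ * u * u⁻¹ * ⁅u, z⁆ := by rw [h u]
    _ = ⁅v, z⁆ * ⁅u, z⁆ := by group
    _ = ⁅u, z⁆ * ⁅v, z⁆ := (h ⁅u, z⁆).symm

/-- central multiplicativity of commutators in the right slot -/
lemma comm_mul_right (u y w : G) (hw : ⁅u, w⁆ ∈ Subgroup.center G) :
    ⁅u, y * w⁆ = ⁅u, y⁆ * ⁅u, w⁆ := by
  have h := Subgroup.mem_center_iff.mp hw
  calc ⁅u, y * w⁆ = ⁅u, y⁆ * (y * ⁅u, w⁆) * y⁻¹ := by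
        simp only [commutatorElement_def]; group
    _ = ⁅u, y⁆ * (⁅u, w⁆ * y) * y⁻¹ := by rw [h y]
    _ = ⁅u, y⁆ * ⁅u, w⁆ := by group

lemma cent_of_lcs {k : ℕ} (hbot : (⊤ : Subgroup G).lowerCentralSeries (k + 2) = ⊥) {u : G}
    (hu : u ∈ (⊤ : Subgroup G).lowerCentralSeries k) (x : G) : ⁅u, x⁆ ∈ Subgroup.center G := by
  rw [Subgroup.mem_center_iff]
  intro g
  have h2 : ⁅⁅u, x⁆, g⁆ ∈ (⊤ : Subgroup G).lowerCentralSeries (k + 2) :=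
    Subgroup.commutator_mem_commutator
      (Subgroup.commutator_mem_commutator hu (Subgroup.mem_top x)) (Subgroup.mem_top g)
  rw [hbot, Subgroup.mem_bot, commutatorElement_eq_one_iff_mul_comm] at h2
  exact h2.symm

/-- every element of the last nontrivial term of the lower central series is an
ordered product of special commutators with entries in the previous term. -/
lemma key_lemma {r : ℕ} (z : Fin r → G) (hz : Subgroup.closure (Set.range z) = ⊤)
    (k : ℕ) (hbot : (⊤ : Subgroup G).lowerCentralSeries (k + 2) = ⊥) :
    ∀ w ∈ (⊤ : Subgroup G).lowerCentralSeries (k + 1), ∃ u : Fin r → G,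
      (∀ i, u i ∈ (⊤ : Subgroup G).lowerCentralSeries k) ∧
      w = (List.ofFn fun i => ⁅u i, z i⁆).prod := by
  have hcent : ∀ u x : G, u ∈ (⊤ : Subgroup G).lowerCentralSeries k → ⁅u, x⁆ ∈ Subgroup.center G :=
    fun u x hu => cent_of_lcs hbot hu x
  set S : Subgroup G :=
    { carrier := { w | ∃ u : Fin r → G, (∀ i, u i ∈ (⊤ : Subgroup G).lowerCentralSeries k) ∧
        w = (List.ofFn fun i => ⁅u i, z i⁆).prod }
      one_mem' := ⟨fun _ => 1, fun _ => one_mem _, by simp⟩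
      mul_mem' := by
        rintro x y ⟨u, hu, rfl⟩ ⟨v, hv, rfl⟩
        refine ⟨fun i => u i * v i, fun i => mul_mem (hu i) (hv i), ?_⟩
        rw [ofFn_prod_mul _ _ (fun i => hcent _ _ (hv i))]
        have he : ∀ i, ⁅u i, z i⁆ * ⁅v i, z i⁆ = ⁅u i * v i, z i⁆ :=
          fun i => (comm_mul_left (u i) (v i) (z i) (hcent _ _ (hv i))).symm
        simp only [he]
      inv_mem' := by
        rintro x ⟨u, hu, rfl⟩
        refine ⟨fun i => (u i)⁻¹, fun i => inv_mem (hu i), ?_⟩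
        rw [eq_comm, eq_inv_iff_mul_eq_one,
          ofFn_prod_mul _ _ (fun i => hcent _ _ (hu i))]
        have he : ∀ i, ⁅(u i)⁻¹, z i⁆ * ⁅u i, z i⁆ = 1 := by
          intro i
          rw [← comm_mul_left _ _ _ (hcent _ _ (hu i)), inv_mul_cancel,
            commutatorElement_one_left]
        simp only [he]
        apply List.prod_eq_one
        intro x hx
        rw [List.mem_ofFn] at hx
        obtain ⟨j, rfl⟩ := hx
        rfl } with hS
  have hle : (⊤ : Subgroup G).lowerCentralSeries (k + 1) ≤ S := by
    show ⁅(⊤ : Subgroup G).lowerCentralSeries k, (⊤ : Subgroup G)⁆ ≤ S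
    rw [Subgroup.commutator_le]
    intro u hu y _
    set T : Subgroup G :=
      { carrier := { y | ⁅u, y⁆ ∈ S }
        one_mem' := by
          show ⁅u, (1 : G)⁆ ∈ S
          rw [commutatorElement_one_right]; exact S.one_mem
        mul_mem' := by
          intro y y' hy hy'
          show ⁅u, y * y'⁆ ∈ S
          rw [comm_mul_right _ _ _ (hcent _ _ hu)]
          exact S.mul_mem hy hy'
        inv_mem' := by
          intro y hy
          show ⁅u, y⁻¹⁆ ∈ S
          have h1 : ⁅u, y⁻¹ * y⁆ = ⁅u, y⁻¹⁆ * ⁅u, y⁆ :=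
            comm_mul_right _ _ _ (hcent _ _ hu)
          rw [inv_mul_cancel, commutatorElement_one_right] at h1
          have h2 : ⁅u, y⁻¹⁆ = ⁅u, y⁆⁻¹ := by
            rw [eq_inv_iff_mul_eq_one, ← h1]
          rw [h2]
          exact S.inv_mem hy } with hT
    have hTtop : (⊤ : Subgroup G) ≤ T := by
      rw [← hz, Subgroup.closure_le]
      rintro _ ⟨i, rfl⟩
      show ⁅u, z i⁆ ∈ S
      refine ⟨fun j => if j = i then u else 1, ?_, ?_⟩
      · intro j; dsimp only; split
        · exact hu
        · exact one_mem _
      · rw [ofFn_prod_single _ i (fun j hj => by simp [hj])]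
        simp
    exact hTtop (Subgroup.mem_top y)
  exact fun w hw => hle hw

end Helpers

lemma main_aux (r : ℕ) : ∀ c : ℕ, ∀ g ∈ commutator (FreeGroup (Fin r)),
    ∃ a : Fin r → FreeGroup (Fin r),
      g⁻¹ * (List.ofFn fun i => ⁅a i, FreeGroup.of i⁆).prod
        ∈ (⊤ : Subgroup (FreeGroup (Fin r))).lowerCentralSeries c := by
  intro c
  induction c with
  | zero => exact fun g _ => ⟨fun _ => 1, Subgroup.mem_top _⟩
  | succ c ih =>
    cases c with
    | zero =>
      intro g hg
      refine ⟨fun _ => 1, ?_⟩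
      have h1 : (List.ofFn fun i : Fin r => ⁅(1 : FreeGroup (Fin r)), FreeGroup.of i⁆).prod
          = 1 := by
        apply List.prod_eq_one
        intro x hx
        rw [List.mem_ofFn] at hx
        obtain ⟨j, rfl⟩ := hx
        exact commutatorElement_one_left _
      rw [h1, mul_one, Subgroup.top_lowerCentralSeries_one]
      exact inv_mem hg
    | succ k =>
      intro g hg
      obtain ⟨a, hw⟩ := ih g hg
      set P : FreeGroup (Fin r) := (List.ofFn fun i => ⁅a i, FreeGroup.of i⁆).prod with hP
      set π : FreeGroup (Fin r) →*
          FreeGroup (Fin r) ⧸ (⊤ : Subgroup (FreeGroup (Fin r))).lowerCentralSeries (k + 2) :=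
        QuotientGroup.mk' ((⊤ : Subgroup (FreeGroup (Fin r))).lowerCentralSeries (k + 2)) with hπ
      have hsurj : Function.Surjective π := QuotientGroup.mk'_surjective _
      have hbot : (⊤ : Subgroup
          (FreeGroup (Fin r) ⧸ (⊤ : Subgroup (FreeGroup (Fin r))).lowerCentralSeries (k + 2))).lowerCentralSeries (k + 2) = ⊥ := by
        rw [← lcs_map_eq π hsurj (k + 2), Subgroup.map_eq_bot_iff, hπ, QuotientGroup.ker_mk']
      have hzt : Subgroup.closure (Set.range fun i : Fin r => π (FreeGroup.of i)) = ⊤ := by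
        have h0 : (Set.range fun i : Fin r => π (FreeGroup.of i))
            = π '' Set.range (FreeGroup.of (α := Fin r)) := by
          rw [← Set.range_comp]; rfl
        rw [h0, ← MonoidHom.map_closure, FreeGroup.closure_range_of]
        exact Subgroup.map_top_of_surjective π hsurj
      have hmem : (π (g⁻¹ * P))⁻¹ ∈ (⊤ : Subgroup
          (FreeGroup (Fin r) ⧸ (⊤ : Subgroup (FreeGroup (Fin r))).lowerCentralSeries (k + 2))).lowerCentralSeries (k + 1) := by
        rw [← map_inv]
        exact Subgroup.lowerCentralSeries.map π (k + 1) ⟨(g⁻¹ * P)⁻¹, inv_mem hw, rfl⟩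
      obtain ⟨u, hu, huw⟩ := key_lemma _ hzt k hbot _ hmem
      choose v hv using fun i => hsurj (u i)
      refine ⟨fun i => a i * v i, ?_⟩
      have hker : ∀ x : FreeGroup (Fin r), π x = 1 →
          x ∈ (⊤ : Subgroup (FreeGroup (Fin r))).lowerCentralSeries (k + 2) := by
        intro x hx
        rwa [hπ, QuotientGroup.mk'_apply, QuotientGroup.eq_one_iff] at hx
      apply hker
      have hcent2 : ∀ i, ⁅u i, π (FreeGroup.of i)⁆ ∈ Subgroup.center
          (FreeGroup (Fin r) ⧸ (⊤ : Subgroup (FreeGroup (Fin r))).lowerCentralSeries (k + 2)) :=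
        fun i => cent_of_lcs hbot (hu i) _
      have eA : π P = (List.ofFn fun i => ⁅π (a i), π (FreeGroup.of i)⁆).prod := by
        rw [hP, map_list_prod, List.map_ofFn]
        have hfn : (⇑π ∘ fun i => ⁅a i, FreeGroup.of i⁆)
            = fun i => ⁅π (a i), π (FreeGroup.of i)⁆ := by
          funext i
          exact map_commutatorElement π _ _
        rw [hfn]
      have eA' : π ((List.ofFn fun i => ⁅a i * v i, FreeGroup.of i⁆).prod)
          = (List.ofFn fun i => ⁅π (a i) * u i, π (FreeGroup.of i)⁆).prod := by
        rw [map_list_prod, List.map_ofFn]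
        have hfn : (⇑π ∘ fun i => ⁅a i * v i, FreeGroup.of i⁆)
            = fun i => ⁅π (a i) * u i, π (FreeGroup.of i)⁆ := by
          funext i
          show π ⁅a i * v i, FreeGroup.of i⁆ = _
          rw [map_commutatorElement, map_mul, hv i]
        rw [hfn]
      have esplit : (List.ofFn fun i => ⁅π (a i) * u i, π (FreeGroup.of i)⁆).prod
          = (List.ofFn fun i => ⁅π (a i), π (FreeGroup.of i)⁆).prod *
            (List.ofFn fun i => ⁅u i, π (FreeGroup.of i)⁆).prod := by
        rw [ofFn_prod_mul _ _ hcent2]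
        have he : ∀ i, ⁅π (a i), π (FreeGroup.of i)⁆ * ⁅u i, π (FreeGroup.of i)⁆
            = ⁅π (a i) * u i, π (FreeGroup.of i)⁆ :=
          fun i => (comm_mul_left _ _ _ (hcent2 i)).symm
        simp only [he]
      calc π (g⁻¹ * (List.ofFn fun i => ⁅a i * v i, FreeGroup.of i⁆).prod)
          = π g⁻¹ * π ((List.ofFn fun i => ⁅a i * v i, FreeGroup.of i⁆).prod) := map_mul π _ _
        _ = π g⁻¹ * (π P * (π (g⁻¹ * P))⁻¹) := by rw [eA', esplit, ← huw, ← eA]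
        _ = (π g⁻¹ * π P) * (π (g⁻¹ * P))⁻¹ := by group
        _ = π (g⁻¹ * P) * (π (g⁻¹ * P))⁻¹ := by rw [map_mul]
        _ = 1 := mul_inv_cancel _

/-- In the free nilpotent group `N = F_r/γ_{c+1}F_r` of rank `r` and class `c`
(`(⊤ : Subgroup ).lowerCentralSeries_ c` is `γ_{c+1}` in the paper's 1-indexed notation),
with `z i` the images of the free generators, every element of the derived
subgroup is a product `⁅g₁,z₁⁆⋯⁅g_r,z_r⁆` of `r` special commutators. -/
theorem freeNilpotent_derived_commutator_width (r c : ℕ) :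
    ∀ g ∈ commutator (FreeGroup (Fin r) ⧸ (⊤ : Subgroup (FreeGroup (Fin r))).lowerCentralSeries c),
      ∃ a : Fin r → FreeGroup (Fin r) ⧸ (⊤ : Subgroup (FreeGroup (Fin r))).lowerCentralSeries c,
        g = (List.ofFn (fun i =>
          ⁅a i, (QuotientGroup.mk (FreeGroup.of i) :
            FreeGroup (Fin r) ⧸ (⊤ : Subgroup (FreeGroup (Fin r))).lowerCentralSeries c)⁆)).prod := by
  intro g hg
  set π : FreeGroup (Fin r) →* FreeGroup (Fin r) ⧸ (⊤ : Subgroup (FreeGroup (Fin r))).lowerCentralSeries c :=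
    QuotientGroup.mk' ((⊤ : Subgroup (FreeGroup (Fin r))).lowerCentralSeries c) with hπ
  have hsurj : Function.Surjective π := QuotientGroup.mk'_surjective _
  have hcomm : (commutator (FreeGroup (Fin r))).map π
      = commutator (FreeGroup (Fin r) ⧸ (⊤ : Subgroup (FreeGroup (Fin r))).lowerCentralSeries c) := by
    show Subgroup.map π ⁅⊤, ⊤⁆ = ⁅⊤, ⊤⁆
    rw [Subgroup.map_commutator, Subgroup.map_top_of_surjective π hsurj]
  rw [← hcomm] at hg
  obtain ⟨g₀, hg₀, rfl⟩ := hg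
  obtain ⟨a, ha⟩ := main_aux r c g₀ hg₀
  refine ⟨fun i => π (a i), ?_⟩
  have h1 : π (g₀⁻¹ * (List.ofFn fun i => ⁅a i, FreeGroup.of i⁆).prod) = 1 := by
    rw [hπ, QuotientGroup.mk'_apply, QuotientGroup.eq_one_iff]
    exact ha
  rw [map_mul, map_inv] at h1
  have h2 : π g₀ = π ((List.ofFn fun i => ⁅a i, FreeGroup.of i⁆).prod) := by
    rw [← inv_mul_eq_one]
    exact h1
  show π g₀ = _
  rw [h2, map_list_prod, List.map_ofFn]
  have hfn : (⇑π ∘ fun i => ⁅a i, FreeGroup.of i⁆)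
      = fun i => ⁅π (a i), (QuotientGroup.mk (FreeGroup.of i) :
          FreeGroup (Fin r) ⧸ (⊤ : Subgroup (FreeGroup (Fin r))).lowerCentralSeries c)⁆ := by
    funext i
    show π ⁅a i, FreeGroup.of i⁆ = _
    rw [map_commutatorElement]
    rfl
  rw [hfn]
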